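/- Let g : [a,b] → ℝ be C¹ with a < 0 < b, g(0)=0, g'(0)=1, x·g(x)>0 for x ∈ [a,b]\{0}, and G(x)=∫₀ˣ g(t)dt. If g(x)² - 2 G(x) g'(x) > 0 for all x ∈ [a,b]\{0}, then x · d/dx (g(x)/x) < 0 for all x ∈ [a,b]\{0}. -/

import Mathlib

open Set

/-- Key lemma: the one-sided (positive side) version of the implication. -/
lemma key_pos_side (g : ℝ → ℝ) (b : ℝ) (hb : 0 < b) (hg : ContDiff ℝ 1 g)
    (hpos : ∀ x ∈ Ioc 0 b, 0 < g x)
    (G : ℝ → ℝ) (hG : ∀ x, G x = ∫ t in (0:ℝ)..x, g t)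
    (hyp : ∀ x ∈ Ioc 0 b, g x ^ 2 - 2 * G x * deriv g x > 0) :
    ∀ x ∈ Ioc 0 b, deriv g x * x < g x := by
  have hc : Continuous g := hg.continuous
  have hgd : ∀ y : ℝ, HasDerivAt g (deriv g y) y := fun y =>
    ((hg.differentiable one_ne_zero) y).hasDerivAt
  have hGd : ∀ y : ℝ, HasDerivAt G (g y) y := by
    intro y
    have h := intervalIntegral.integral_hasDerivAt_right
      (hc.intervalIntegrable 0 y)
      (hc.stronglyMeasurableAtFilter _ _) hc.continuousAt
    have : G = fun u => ∫ t in (0:ℝ)..u, g t := funext hG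
    rw [this]; exact h
  have hGpos : ∀ x ∈ Ioc 0 b, 0 < G x := by
    intro x hx
    rw [hG]
    apply intervalIntegral.intervalIntegral_pos_of_pos_on (hc.intervalIntegrable _ _)
    · intro t ht; exact hpos t ⟨ht.1, le_trans ht.2.le hx.2⟩
    · exact hx.1
  set s : ℝ → ℝ := fun y => Real.sqrt (2 * G y) with hsdef
  set η : ℝ → ℝ := fun y => g y / s y with hηdef
  have hspos : ∀ x ∈ Ioc 0 b, 0 < s x := fun x hx =>
    Real.sqrt_pos.2 (by linarith [hGpos x hx])
  have hsd : ∀ x ∈ Ioc 0 b, HasDerivAt s (η x) x := by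
    intro x hx
    have h2G : HasDerivAt (fun y => 2 * G y) (2 * g x) x := (hGd x).const_mul 2
    have hne : (2 : ℝ) * G x ≠ 0 := by have := hGpos x hx; positivity
    have hsq := (Real.hasDerivAt_sqrt hne).comp x h2G
    have hs0 : s x ≠ 0 := ne_of_gt (hspos x hx)
    have heq : η x = 1 / (2 * Real.sqrt (2 * G x)) * (2 * g x) := by
      simp only [hηdef, hsdef]
      field_simp
    rw [heq]
    exact hsq
  have hηd : ∀ x ∈ Ioc 0 b,
      HasDerivAt η ((deriv g x * s x - g x * η x) / s x ^ 2) x := by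
    intro x hx
    exact (hgd x).div (hsd x hx) (ne_of_gt (hspos x hx))
  have hanti : StrictAntiOn η (Ioc 0 b) := by
    apply strictAntiOn_of_deriv_neg (convex_Ioc 0 b)
    · intro x hx
      exact (hηd x hx).differentiableAt.continuousAt.continuousWithinAt
    · rw [interior_Ioc]
      intro x hx
      have hx' : x ∈ Ioc 0 b := ⟨hx.1, hx.2.le⟩
      rw [(hηd x hx').deriv]
      have hS : 0 < s x := hspos x hx'
      have hS2 : s x ^ 2 = 2 * G x := Real.sq_sqrt (by linarith [hGpos x hx'])
      have hg0 : 0 < g x := hpos x hx'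
      have hh := hyp x hx'
      apply div_neg_of_neg_of_pos _ (by positivity)
      have hexp : g x * η x = g x * g x / s x := by
        simp only [hηdef]; ring
      have hss : s x * s x = 2 * G x := by rw [← hS2]; ring
      have h3 : deriv g x * s x * s x < g x * g x := by
        have he : deriv g x * s x * s x = 2 * G x * deriv g x := by
          rw [mul_assoc, hss]; ring
        nlinarith [hh]
      rw [hexp, sub_neg, lt_div_iff₀ hS]
      exact h3
  intro x hx
  have hS : 0 < s x := hspos x hx
  have hS2 : s x ^ 2 = 2 * G x := Real.sq_sqrt (by linarith [hGpos x hx])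
  have hg0 : 0 < g x := hpos x hx
  -- Step 1: x * g x ≤ 2 * G x
  have hev : ∀ᶠ ε in nhdsWithin (0:ℝ) (Ioi 0), η x * (x - ε) ≤ s x := by
    filter_upwards [Ioo_mem_nhdsGT_of_mem ⟨le_refl (0:ℝ), hx.1⟩] with ε hε
    have hsub : Icc ε x ⊆ Ioc 0 b := fun y hy =>
      ⟨lt_of_lt_of_le hε.1 hy.1, le_trans hy.2 hx.2⟩
    obtain ⟨c, hc', hceq⟩ := exists_hasDerivAt_eq_slope s η hε.2
      (fun y hy => (hsd y (hsub hy)).differentiableAt.continuousAt.continuousWithinAt)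
      (fun y hy => hsd y (hsub ⟨hy.1.le, hy.2.le⟩))
    have hcmem : c ∈ Ioc 0 b := hsub ⟨hc'.1.le, hc'.2.le⟩
    have hlt : η x < η c := hanti hcmem hx hc'.2
    have hxε : 0 < x - ε := by linarith [hε.2]
    have hslope : η c * (x - ε) = s x - s ε := by
      rw [hceq]; field_simp
    have hsε : 0 ≤ s ε := Real.sqrt_nonneg _
    nlinarith
  have htend : Filter.Tendsto (fun ε : ℝ => η x * (x - ε)) (nhdsWithin (0:ℝ) (Ioi 0))
      (nhds (η x * x)) := by
    have hcont : Continuous fun ε : ℝ => η x * (x - ε) := by continuity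
    have := (hcont.tendsto 0).mono_left
      (nhdsWithin_le_nhds : nhdsWithin (0:ℝ) (Ioi 0) ≤ nhds 0)
    simpa using this
  have hle : η x * x ≤ s x := le_of_tendsto htend hev
  have hkey : x * g x ≤ 2 * G x := by
    have : g x / s x * x ≤ s x := hle
    rw [div_mul_eq_mul_div, div_le_iff₀ hS] at this
    nlinarith
  -- Step 2: conclude
  rcases le_or_gt (deriv g x) 0 with h | h
  · nlinarith [hx.1]
  · have hh := hyp x hx
    nlinarith [mul_le_mul_of_nonneg_left hkey h.le]

theorem thm21_second_implication (g : ℝ → ℝ) (a b : ℝ) (ha : a < 0) (hb : 0 < b)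
    (hg : ContDiff ℝ 1 g) (h0 : g 0 = 0) (h1 : deriv g 0 = 1)
    (hxg : ∀ x ∈ Icc a b, x ≠ 0 → 0 < x * g x)
    (G : ℝ → ℝ) (hG : ∀ x, G x = ∫ t in (0:ℝ)..x, g t)
    (hyp : ∀ x ∈ Icc a b, x ≠ 0 → g x ^ 2 - 2 * G x * deriv g x > 0) :
    ∀ x ∈ Icc a b, x ≠ 0 → x * deriv (fun y => g y / y) x < 0 := by
  have hgd : ∀ y : ℝ, HasDerivAt g (deriv g y) y := fun y =>
    ((hg.differentiable one_ne_zero) y).hasDerivAt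
  intro x hx hx0
  have hdiv : HasDerivAt (fun y => g y / y) ((deriv g x * x - g x * 1) / x ^ 2) x :=
    (hgd x).div (hasDerivAt_id x) hx0
  rw [hdiv.deriv]
  have hx2 : (0:ℝ) < x ^ 2 := by positivity
  rcases hx0.lt_or_gt with hneg | hpos
  · -- x < 0 : reflect
    have hkey := key_pos_side (fun y => -g (-y)) (-a) (by linarith) 
      ((hg.comp contDiff_neg).neg)
      (by
        intro y hy
        have hmem : -y ∈ Icc a b := ⟨by linarith [hy.2], by linarith [hy.1]⟩
        have := hxg (-y) hmem (by intro h; rw [neg_eq_zero] at h; linarith [hy.1])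
        show 0 < -g (-y)
        nlinarith [hy.1])
      (fun y => G (-y))
      (by
        intro y
        show G (-y) = ∫ t in (0:ℝ)..y, -g (-t)
        have h1' : G (-y) = ∫ t in (0:ℝ)..(-y), g t := hG _
        rw [h1', intervalIntegral.integral_neg]
        rw [show (∫ t in (0:ℝ)..y, g (-t)) = ∫ t in (-y)..(-(0:ℝ)), g t from
          intervalIntegral.integral_comp_neg g]
        rw [neg_zero, intervalIntegral.integral_symm])
      ?_ (-x) ⟨by linarith, by linarith [hx.1]⟩
    · -- translate conclusion
      have hd2 : ∀ y : ℝ, HasDerivAt (fun z => -g (-z)) (deriv g (-y)) y := by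
        intro y
        have h1' : HasDerivAt (fun z : ℝ => -z) (-1) y := (hasDerivAt_id y).neg
        have h2' := ((hgd (-y)).comp y h1').neg
        simp only [mul_neg, mul_one, neg_neg] at h2'; exact h2'
      rw [(hd2 (-x)).deriv] at hkey
      simp only [neg_neg] at hkey
      -- hkey : deriv g x * -x < -g x
      have hnum : 0 < deriv g x * x - g x * 1 := by linarith
      have hrw : x * ((deriv g x * x - g x * 1) / x ^ 2) =
          (deriv g x * x - g x * 1) / x := by
        field_simp
      rw [hrw]
      exact div_neg_of_pos_of_neg hnum hneg
    · -- transformed hyp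
      intro y hy
      have hmem : -y ∈ Icc a b := ⟨by linarith [hy.2], by linarith [hy.1]⟩
      have hne : (-y) ≠ 0 := by intro h; rw [neg_eq_zero] at h; linarith [hy.1]
      have hd2 : ∀ z : ℝ, HasDerivAt (fun w => -g (-w)) (deriv g (-z)) z := by
        intro z
        have h1' : HasDerivAt (fun w : ℝ => -w) (-1) z := (hasDerivAt_id z).neg
        have h2' := ((hgd (-z)).comp z h1').neg
        simp only [mul_neg, mul_one, neg_neg] at h2'; exact h2'
      rw [(hd2 y).deriv]
      have := hyp (-y) hmem hne
      nlinarith [this]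
  · -- x > 0
    have hkey := key_pos_side g b hb hg
      (by
        intro y hy
        have hmem : y ∈ Icc a b := ⟨by linarith [hy.1], hy.2⟩
        have := hxg y hmem (ne_of_gt hy.1)
        nlinarith [hy.1])
      G hG
      (by
        intro y hy
        exact hyp y ⟨by linarith [hy.1], hy.2⟩ (ne_of_gt hy.1))
      x ⟨hpos, hx.2⟩
    have hnum : deriv g x * x - g x * 1 < 0 := by linarith
    exact mul_neg_of_pos_of_neg hpos (div_neg_of_neg_of_pos hnum hx2)
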